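/- Let η ∈ ℝ and let u, v : U → ℝ be smooth functions on an open set U ⊆ ℝ² satisfying the nonlinear Schrödinger system u_t + v_{xx} − 2(u² + v²)v = 0, −v_t + u_{xx} − 2(u² + v²)u = 0 on U. Define F₁₁ = 2u, F₂₁ = −2v, F₃₁ = 2η, F₁₂ = −4ηu − 2v_x, F₂₂ = 4ηv − 2u_x, F₃₂ = −4η² − 2(u² + v²) (all functions of (x,t) through u, v and their derivatives). Then on U the structure equations with δ = 1 hold: −∂_t F₁₁ + ∂_x F₁₂ = F₃₁F₂₂ − F₃₂F₂₁, −∂_t F₂₁ + ∂_x F₂₂ = F₁₁F₃₂ − F₁₂F₃₁, −∂_t F₃₁ + ∂_x F₃₂ = F₁₁F₂₂ − F₁₂F₂₁; hence the NLS⁻ system describes pseudospherical surfaces with these associated functions. -/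

import Mathlib

open Real

/-- Partial derivative in the `x` direction of a function on the `(x, t)` plane. -/
noncomputable def pdx (f : ℝ × ℝ → ℝ) (p : ℝ × ℝ) : ℝ := fderiv ℝ f p (1, 0)

/-- Partial derivative in the `t` direction of a function on the `(x, t)` plane. -/
noncomputable def pdt (f : ℝ × ℝ → ℝ) (p : ℝ × ℝ) : ℝ := fderiv ℝ f p (0, 1)

/-- The structure equations of a surface of constant Gaussian curvature `-δ`:
`−∂ₜF₁₁ + ∂ₓF₁₂ = F₃₁F₂₂ − F₃₂F₂₁`, `−∂ₜF₂₁ + ∂ₓF₂₂ = F₁₁F₃₂ − F₁₂F₃₁`,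
`−∂ₜF₃₁ + ∂ₓF₃₂ = δ(F₁₁F₂₂ − F₁₂F₂₁)` on `U`. -/
def StructEqs (δ : ℝ) (U : Set (ℝ × ℝ)) (F11 F12 F21 F22 F31 F32 : ℝ × ℝ → ℝ) : Prop :=
  ∀ p ∈ U,
    -(pdt F11 p) + pdx F12 p = F31 p * F22 p - F32 p * F21 p ∧
    -(pdt F21 p) + pdx F22 p = F11 p * F32 p - F12 p * F31 p ∧
    -(pdt F31 p) + pdx F32 p = δ * (F11 p * F22 p - F12 p * F21 p)

/-- Linearity of directional derivatives. -/
lemma pd_lin (a b : ℝ) (f g : ℝ × ℝ → ℝ) (p w : ℝ × ℝ)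
    (hf : DifferentiableAt ℝ f p) (hg : DifferentiableAt ℝ g p) :
    fderiv ℝ (fun q => a * f q + b * g q) p w
      = a * fderiv ℝ f p w + b * fderiv ℝ g p w := by
  rw [fderiv_fun_add ((hf.const_mul a)) ((hg.const_mul b)),
    fderiv_const_mul hf, fderiv_const_mul hg]
  simp

/-- Derivative of `c - 2(f² + g²)`. -/
lemma pd_sq (c : ℝ) (f g : ℝ × ℝ → ℝ) (p w : ℝ × ℝ)
    (hf : DifferentiableAt ℝ f p) (hg : DifferentiableAt ℝ g p) :
    fderiv ℝ (fun q => c - 2 * (f q ^ 2 + g q ^ 2)) p w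
      = -(4 * f p * fderiv ℝ f p w) - 4 * g p * fderiv ℝ g p w := by
  have h := (((hf.hasFDerivAt.mul hf.hasFDerivAt).add
      (hg.hasFDerivAt.mul hg.hasFDerivAt)).const_mul 2).const_sub c
  have he : (fun q => c - 2 * (f q ^ 2 + g q ^ 2))
      = fun x => c - 2 * (f * f + g * g) x := by
    funext q; simp only [Pi.add_apply, Pi.mul_apply]; ring
  rw [he, h.fderiv]
  simp
  ring

/-- The NLS⁻ system `u_t + v_xx − 2(u² + v²)v = 0`, `−v_t + u_xx − 2(u² + v²)u = 0`
describes pseudospherical surfaces (`δ = 1`). -/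
theorem nls_minus_describes_pss (η : ℝ) (U : Set (ℝ × ℝ)) (hU : IsOpen U)
    (u v : ℝ × ℝ → ℝ)
    (hu : ContDiffOn ℝ (⊤ : ℕ∞) u U) (hv : ContDiffOn ℝ (⊤ : ℕ∞) v U)
    (heq1 : ∀ p ∈ U, pdt u p + pdx (pdx v) p - 2 * (u p ^ 2 + v p ^ 2) * v p = 0)
    (heq2 : ∀ p ∈ U, -(pdt v p) + pdx (pdx u) p - 2 * (u p ^ 2 + v p ^ 2) * u p = 0) :
    StructEqs 1 U
      (fun q => 2 * u q)
      (fun q => -4 * η * u q - 2 * pdx v q)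
      (fun q => -2 * v q)
      (fun q => 4 * η * v q - 2 * pdx u q)
      (fun _ => 2 * η)
      (fun q => -4 * η ^ 2 - 2 * (u q ^ 2 + v q ^ 2)) := by
  intro p hp
  have hup : ContDiffAt ℝ (⊤ : ℕ∞) u p := hu.contDiffAt (hU.mem_nhds hp)
  have hvp : ContDiffAt ℝ (⊤ : ℕ∞) v p := hv.contDiffAt (hU.mem_nhds hp)
  have hud : DifferentiableAt ℝ u p := hup.differentiableAt (by norm_num)
  have hvd : DifferentiableAt ℝ v p := hvp.differentiableAt (by norm_num)
  have hfu : ContDiffAt ℝ (⊤ : ℕ∞) (fderiv ℝ u) p :=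
    hup.fderiv_right (by exact_mod_cast le_top)
  have hfv : ContDiffAt ℝ (⊤ : ℕ∞) (fderiv ℝ v) p :=
    hvp.fderiv_right (by exact_mod_cast le_top)
  have hux : DifferentiableAt ℝ (pdx u) p :=
    ((hfu.clm_apply contDiffAt_const).differentiableAt (by simp) :
      DifferentiableAt ℝ (fun q => fderiv ℝ u q (1, 0)) p)
  have hvx : DifferentiableAt ℝ (pdx v) p :=
    ((hfv.clm_apply contDiffAt_const).differentiableAt (by simp) :
      DifferentiableAt ℝ (fun q => fderiv ℝ v q (1, 0)) p)
  have h1 := heq1 p hp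
  have h2 := heq2 p hp
  -- compute the relevant derivatives
  have e11 : ∀ w, fderiv ℝ (fun q => 2 * u q) p w = 2 * fderiv ℝ u p w := by
    intro w
    have : (fun q => 2 * u q) = fun q => 2 * u q + 0 * u q := by funext q; ring
    rw [this, pd_lin 2 0 u u p w hud hud]; ring
  have e21 : ∀ w, fderiv ℝ (fun q => -2 * v q) p w = -2 * fderiv ℝ v p w := by
    intro w
    have : (fun q => -2 * v q) = fun q => (-2) * v q + 0 * v q := by funext q; ring
    rw [this, pd_lin (-2) 0 v v p w hvd hvd]; ring
  have e12 : ∀ w, fderiv ℝ (fun q => -4 * η * u q - 2 * pdx v q) p w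
      = -4 * η * fderiv ℝ u p w + (-2) * fderiv ℝ (pdx v) p w := by
    intro w
    have : (fun q => -4 * η * u q - 2 * pdx v q)
        = fun q => (-4 * η) * u q + (-2) * pdx v q := by funext q; ring
    rw [this, pd_lin (-4 * η) (-2) u (pdx v) p w hud hvx]
  have e22 : ∀ w, fderiv ℝ (fun q => 4 * η * v q - 2 * pdx u q) p w
      = 4 * η * fderiv ℝ v p w + (-2) * fderiv ℝ (pdx u) p w := by
    intro w
    have : (fun q => 4 * η * v q - 2 * pdx u q)
        = fun q => (4 * η) * v q + (-2) * pdx u q := by funext q; ring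
    rw [this, pd_lin (4 * η) (-2) v (pdx u) p w hvd hux]
  have e32 : ∀ w, fderiv ℝ (fun q => -4 * η ^ 2 - 2 * (u q ^ 2 + v q ^ 2)) p w
      = -(4 * u p * fderiv ℝ u p w) - 4 * v p * fderiv ℝ v p w :=
    fun w => pd_sq (-4 * η ^ 2) u v p w hud hvd
  have e31 : fderiv ℝ (fun _ : ℝ × ℝ => 2 * η) p = 0 := fderiv_const_apply (2 * η)
  simp only [pdx, pdt] at h1 h2 e12 e22 ⊢
  rw [e11, e21, e12, e22, e32, e31]
  refine ⟨by linear_combination (-2 : ℝ) * h1, by linear_combination (-2 : ℝ) * h2, ?_⟩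
  simp only [e31, ContinuousLinearMap.zero_apply]
  ring
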